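/- Suppose u : E* → R^2 is a function on finite event sequences with u(ε) = (0,0), all values of u on single events lie in U = {(−1,0)} ∪ ({0} × R), and for each event e there are r̃(e) in R^2 and Γ̃(e) in LT+(2) ∪ {0} with u(e·τ) = r̃(e) + Γ̃(e) u(τ) for all τ, and moreover r̃(e) + Γ̃(e) x ∈ U for all x ∈ U. Then for every event e with Γ̃(e) ≠ 0: r̃_1(e) = 0, Γ̃_{1,1}(e) = 1, and Γ̃_{2,1}(e) = r̃_2(e). -/
import Mathlib


/-- `LT⁺(2)`: 2×2 lower triangular matrices with strictly positive diagonal. -/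
def LTpos2 : Set (Matrix (Fin 2) (Fin 2) ℝ) :=
  {A | (∀ i j : Fin 2, i < j → A i j = 0) ∧ ∀ i : Fin 2, 0 < A i i}

/-- `U = {(-1, 0)} ∪ ({0} × ℝ) ⊆ ℝ²`. -/
def Uset : Set (Fin 2 → ℝ) :=
  insert ![(-1 : ℝ), 0] {x | x 0 = 0}

theorem stmt_9 {E : Type*} (u : List E → Fin 2 → ℝ)
    (rt : E → Fin 2 → ℝ) (Γ : E → Matrix (Fin 2) (Fin 2) ℝ)
    (hu0 : u [] = 0)
    (huU : ∀ e : E, u [e] ∈ Uset)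
    (hrec : ∀ (e : E) (τ : List E), u (e :: τ) = rt e + (Γ e).mulVec (u τ))
    (hΓ : ∀ e : E, Γ e ∈ LTpos2 ∨ Γ e = 0)
    (hclosed : ∀ (e : E) (x : Fin 2 → ℝ), x ∈ Uset → rt e + (Γ e).mulVec x ∈ Uset) :
    ∀ e : E, Γ e ≠ 0 →
      rt e 0 = 0 ∧ Γ e 0 0 = 1 ∧ Γ e 1 0 = rt e 1 := by
  intro e hne
  rcases hΓ e with ⟨htri, hdiag⟩ | h0
  · have hΓ01 : Γ e 0 1 = 0 := htri 0 1 (by norm_num)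
    have h00 : (0:ℝ) < Γ e 0 0 := hdiag 0
    have h11 : (0:ℝ) < Γ e 1 1 := hdiag 1
    -- key : for t, image of (0,t)
    have key : ∀ t : ℝ, rt e 0 = 0 ∨ (rt e 0 = -1 ∧ rt e 1 + Γ e 1 1 * t = 0) := by
      intro t
      have hmem : (![0, t] : Fin 2 → ℝ) ∈ Uset := Or.inr (by simp)
      rcases hclosed e ![0, t] hmem with h | h
      · right
        have h0 := congrFun h 0
        have h1 := congrFun h 1
        simp [Matrix.mulVec, dotProduct, Fin.sum_univ_two, hΓ01] at h0 h1
        exact ⟨h0, by linarith⟩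
      · left
        have h0 : (rt e + (Γ e).mulVec ![0, t]) 0 = 0 := h
        simpa [Matrix.mulVec, dotProduct, Fin.sum_univ_two, hΓ01] using h0
    have hrt0 : rt e 0 = 0 := by
      rcases key 0 with h | ⟨_, ha⟩
      · exact h
      rcases key 1 with h | ⟨_, hb⟩
      · exact h
      nlinarith
    -- now image of (-1, 0)
    have hmem : (![(-1:ℝ), 0] : Fin 2 → ℝ) ∈ Uset := Or.inl rfl
    rcases hclosed e ![(-1:ℝ), 0] hmem with h | h
    · have h0 := congrFun h 0
      have h1 := congrFun h 1
      simp [Matrix.mulVec, dotProduct, Fin.sum_univ_two, hΓ01, hrt0] at h0 h1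
      exact ⟨hrt0, by linarith, by linarith⟩
    · exfalso
      have h0 : (rt e + (Γ e).mulVec ![(-1:ℝ), 0]) 0 = 0 := h
      simp [Matrix.mulVec, dotProduct, Fin.sum_univ_two, hΓ01, hrt0] at h0
      nlinarith
  · exact absurd h0 hne
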